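/- Let b ≥ 6 be even and let 3 ≤ d ≤ b/2 be an odd integer. Then every arithmetic progression with common difference d consisting entirely of b-anti-Niven numbers has length at most ⌈2b/d⌉ + 2. -/

import Mathlib

/-- Base-`b` digit sum of `n`. -/
def sdig (b n : ℕ) : ℕ := (Nat.digits b n).sum

/-- A positive integer `n` is `b`-anti-Niven if it is coprime to its base-`b` digit sum. -/
def AntiNiven (b n : ℕ) : Prop := 0 < n ∧ Nat.gcd n (sdig b n) = 1

lemma sdig_split (b x : ℕ) (hb : 2 ≤ b) (hx : 0 < x) :
    sdig b x = x % b + sdig b (x / b) := by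
  unfold sdig
  rw [Nat.digits_def' (by omega : 1 < b) hx]
  simp

/-- If `x` is even and anti-Niven, then the digit sum of `x / b` is odd. -/
lemma antiNiven_even_odd (b x : ℕ) (hb : 2 ≤ b) (heb : Even b)
    (hx : AntiNiven b x) (hex : Even x) : Odd (sdig b (x / b)) := by
  obtain ⟨hx0, hg⟩ := hx
  have hsodd : Odd (sdig b x) := by
    rw [← Nat.not_even_iff_odd]
    intro hse
    have h2 : 2 ∣ Nat.gcd x (sdig b x) := Nat.dvd_gcd hex.two_dvd hse.two_dvd
    rw [hg] at h2
    omega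
  have hsplit := sdig_split b x hb hx0
  have hmod := Nat.mod_add_div x b
  have hbk : Even (b * (x / b)) := heb.mul_right _
  -- atomize
  set m := x % b with hm
  set s1 := sdig b (x / b) with hs1
  set P := b * (x / b) with hP
  rw [Nat.odd_iff] at hsodd ⊢
  rw [Nat.even_iff] at hex hbk
  omega

lemma sdig_succ (b M : ℕ) (hb : 2 ≤ b) (h : M % b ≠ b - 1) :
    sdig b (M + 1) = sdig b M + 1 := by
  rcases Nat.eq_zero_or_pos M with hM | hM
  · subst hM
    have hd1 : Nat.digits b 1 = [1] := by
      rw [Nat.digits_def' (by omega : 1 < b) (by omega)]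
      rw [Nat.mod_eq_of_lt (by omega), Nat.div_eq_of_lt (by omega)]
      simp
    show sdig b (0 + 1) = sdig b 0 + 1
    simp [sdig, hd1]
  · have hmlt : M % b < b := Nat.mod_lt _ (by omega)
    have hmod1 : (M + 1) % b = M % b + 1 := by
      rw [Nat.add_mod, Nat.mod_eq_of_lt (show 1 < b by omega), Nat.mod_eq_of_lt (by omega)]
    have hdiv1 : (M + 1) / b = M / b := by
      have e1 := Nat.mod_add_div (M + 1) b
      have e2 := Nat.mod_add_div M b
      rw [hmod1] at e1
      have : b * ((M + 1) / b) = b * (M / b) := by omega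
      exact Nat.eq_of_mul_eq_mul_left (by omega) this
    rw [sdig_split b (M + 1) hb (by omega), sdig_split b M hb hM, hmod1, hdiv1]
    omega

/-- If two consecutive terms of the AP lie in block `M`, the digit sum of `M` is odd. -/
lemma block_odd (b d n t : ℕ) (hb : 2 ≤ b) (heb : Even b) (hodd : Odd d)
    (h : ∀ j : ℕ, j < t → AntiNiven b (n + j * d))
    (j M : ℕ) (hjt : j + 1 < t)
    (h1 : M * b ≤ n + j * d) (h2 : n + (j + 1) * d < (M + 1) * b) :
    Odd (sdig b M) := by
  have hx := h j (by omega)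
  have hy := h (j + 1) hjt
  have hyx : n + (j + 1) * d = (n + j * d) + d := by ring
  rcases Nat.even_or_odd (n + j * d) with he | ho
  · have hdiv : (n + j * d) / b = M :=
      Nat.div_eq_of_lt_le h1 (by omega)
    rw [← hdiv]
    exact antiNiven_even_odd b _ hb heb hx he
  · have hey : Even (n + (j + 1) * d) := by
      rw [hyx]; exact ho.add_odd hodd
    have hdiv : (n + (j + 1) * d) / b = M :=
      Nat.div_eq_of_lt_le (by omega) h2
    rw [← hdiv]
    exact antiNiven_even_odd b _ hb heb hy hey

theorem stmt_9 (b d : ℕ) (hb : 6 ≤ b) (heven : Even b)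
    (hd3 : 3 ≤ d) (hdb : d ≤ b / 2) (hodd : Odd d) :
    ∀ n t : ℕ, (∀ j : ℕ, j < t → AntiNiven b (n + j * d)) →
      (t : ℤ) ≤ ⌈(2 * b : ℚ) / d⌉ + 2 := by
  intro n t h
  by_contra hlt
  push_neg at hlt
  have hd0 : (0 : ℚ) < d := by positivity
  have hb2 : 2 ≤ b := by omega
  have h2d : 2 * d ≤ b := by omega
  set Cz : ℤ := ⌈(2 * b : ℚ) / d⌉ with hCz
  have hCpos : 0 ≤ Cz := Int.ceil_nonneg (by positivity)
  obtain ⟨C, hC⟩ : ∃ C : ℕ, (C : ℤ) = Cz := ⟨Cz.toNat, Int.toNat_of_nonneg hCpos⟩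
  have hC1 : 2 * b ≤ C * d := by
    have h1 : (2 * b : ℚ) / d ≤ (Cz : ℚ) := Int.le_ceil _
    rw [div_le_iff₀ hd0] at h1
    have h2 : ((2 * b : ℕ) : ℚ) ≤ ((C * d : ℕ) : ℚ) := by push_cast [← hC] at h1 ⊢; linarith
    exact_mod_cast h2
  have hC2 : C * d < 2 * b + d := by
    have h1 : (Cz : ℚ) < (2 * b : ℚ) / d + 1 := Int.ceil_lt_add_one _
    rw [div_add' _ _ _ (ne_of_gt hd0), lt_div_iff₀ hd0] at h1
    have h2 : ((C * d : ℕ) : ℚ) < ((2 * b + d : ℕ) : ℚ) := by push_cast [← hC] at h1 ⊢; linarith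
    exact_mod_cast h2
  have ht : C + 3 ≤ t := by
    rw [← hC] at hlt
    exact_mod_cast hlt
  have hn0 : 0 < n := by
    have := (h 0 (by omega)).1
    omega
  set q := n / b with hq
  set r := n % b with hr
  have hn : r + b * q = n := Nat.mod_add_div n b
  have hrb : r < b := Nat.mod_lt _ (by omega)
  -- generic: if n + A = M * b with A ≤ 2b + d, then sdig b M is odd
  have hpair : ∀ M A : ℕ, n + A = M * b → A ≤ 2 * b + d → Odd (sdig b M) := by
    intro M A hA hAle
    set j := (A + d - 1) / d with hj
    have hdm : d * j + (A + d - 1) % d = A + d - 1 := Nat.div_add_mod _ d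
    have hrem : (A + d - 1) % d < d := Nat.mod_lt _ (by omega)
    have hbounds : A ≤ j * d ∧ j * d < A + d := by
      have e : j * d = d * j := by ring
      rw [e]
      set P := d * j with hP
      omega
    obtain ⟨hu1, hu2⟩ := hbounds
    have hjC : j < C + 2 := by
      have hlt2 : j * d < (C + 2) * d := by
        have e : (C + 2) * d = C * d + 2 * d := by ring
        rw [e]
        set P := j * d with hP
        set Q := C * d with hQ
        omega
      exact Nat.lt_of_mul_lt_mul_right hlt2
    have hjt : j + 1 < t := by omega
    apply block_odd b d n t hb2 heven hodd h j M hjt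
    · set P := j * d with hP
      set Q := M * b with hQ
      omega
    · have e1 : (j + 1) * d = j * d + d := by ring
      have e2 : (M + 1) * b = M * b + b := by ring
      rw [e1, e2]
      set P := j * d with hP
      set Q := M * b with hQ
      omega
  -- block equations
  have hA1 : n + (b - r) = (q + 1) * b := by
    have e : (q + 1) * b = b * q + b := by ring
    set Q := b * q with hQ
    omega
  have hA2 : n + (2 * b - r) = (q + 2) * b := by
    have e : (q + 2) * b = b * q + 2 * b := by ring
    set Q := b * q with hQ
    omega
  have hA3 : n + (3 * b - r) = (q + 3) * b := by
    have e : (q + 3) * b = b * q + 3 * b := by ring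
    set Q := b * q with hQ
    omega
  by_cases hq1 : (q + 1) % b = b - 1
  · -- the block index q+1 ends in digit b-1
    have hkey := Nat.mod_add_div (q + 1) b
    set k := (q + 1) / b with hk
    have hqeq : q = b * k + (b - 2) := by
      set K := b * k with hK
      omega
    have hqmod : q % b = b - 2 := by
      rw [hqeq, Nat.mul_add_mod]
      exact Nat.mod_eq_of_lt (by omega)
    have hq2mod : (q + 2) % b = 0 := by
      have e : q + 2 = b * (k + 1) := by
        rw [hqeq]; ring_nf; omega
      rw [e, Nat.mul_mod_right]
    by_cases hrB : r + d < b
    · -- use blocks q and q+1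
      have hOq : Odd (sdig b q) := by
        apply block_odd b d n t hb2 heven hodd h 0 q (by omega)
        · set Q := b * q with hQ
          have e : q * b = b * q := by ring
          rw [e]
          omega
        · have e : (q + 1) * b = b * q + b := by ring
          rw [e]
          set Q := b * q with hQ
          omega
      have hOq1 : Odd (sdig b (q + 1)) := hpair (q + 1) (b - r) hA1 (by omega)
      have hsucc := sdig_succ b q hb2 (by omega)
      obtain ⟨k1, hk1⟩ := hOq
      obtain ⟨k2, hk2⟩ := hOq1
      omega
    · -- use blocks q+2 and q+3
      have hOq2 : Odd (sdig b (q + 2)) := hpair (q + 2) (2 * b - r) hA2 (by omega)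
      have hOq3 : Odd (sdig b (q + 3)) := hpair (q + 3) (3 * b - r) hA3 (by omega)
      have hsucc : sdig b (q + 3) = sdig b (q + 2) + 1 := by
        have e : q + 3 = q + 2 + 1 := by omega
        rw [e]
        exact sdig_succ b (q + 2) hb2 (by omega)
      obtain ⟨k1, hk1⟩ := hOq2
      obtain ⟨k2, hk2⟩ := hOq3
      omega
  · -- use blocks q+1 and q+2
    have hOq1 : Odd (sdig b (q + 1)) := hpair (q + 1) (b - r) hA1 (by omega)
    have hOq2 : Odd (sdig b (q + 2)) := hpair (q + 2) (2 * b - r) hA2 (by omega)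
    have hsucc : sdig b (q + 2) = sdig b (q + 1) + 1 := by
      have e : q + 2 = q + 1 + 1 := by omega
      rw [e]
      exact sdig_succ b (q + 1) hb2 hq1
    obtain ⟨k1, hk1⟩ := hOq1
    obtain ⟨k2, hk2⟩ := hOq2
    omega
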